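/- The rings A = ℚ[x,y]/⟨x² − y², xy⟩ and B = ℚ[x,y]/⟨x², (x+y)²⟩ are not isomorphic as graded ℚ-algebras: B contains a nonzero degree-one element z with z² = 0, while A contains no such element. -/

import Mathlib

open MvPolynomial TrivSqZeroExt DualNumber

set_option synthInstance.maxHeartbeats 1000000
set_option maxHeartbeats 1000000

noncomputable abbrev S : Type := DualNumber (DualNumber ℂ)

noncomputable instance iS1 : CommRing S := inferInstance
noncomputable instance iS2 : Algebra ℚ S := inferInstance
noncomputable instance iS3 : Algebra ℂ S := inferInstance

noncomputable def uu : S := inl ε + ε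
noncomputable def vv : S := algebraMap ℂ S Complex.I * (inl ε - ε)

lemma e1 : (inl ε : S) * inl ε = 0 := by
  rw [inl_mul_inl, eps_mul_eps, inl_zero]

lemma e2 : (ε : S) * ε = 0 := eps_mul_eps

lemma e3 : (inl ε : S) * ε = inr ε := by
  rw [show (ε : S) = inr 1 from rfl, inl_mul_inr, smul_eq_mul, mul_one]

lemma hu2 : uu * uu = inr ε + inr ε := by
  unfold uu
  have : ((inl ε : S) + ε) * (inl ε + ε) = inl ε * inl ε + (inl ε * ε + inl ε * ε) + ε * ε := by
    ring
  rw [this, e1, e2, e3]; ring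

lemma hv2 : vv * vv = inr ε + inr ε := by
  unfold vv
  have h1 : ∀ j x : S, (j * x) * (j * x) = (j * j) * (x * x) := fun j x => by ring
  rw [h1, ← map_mul, Complex.I_mul_I, map_neg, map_one]
  have : ((inl ε : S) - ε) * (inl ε - ε) = inl ε * inl ε - (inl ε * ε + inl ε * ε) + ε * ε := by
    ring
  rw [this, e1, e2, e3]; ring

lemma huv : uu * vv = 0 := by
  unfold uu vv
  have : ((inl ε : S) + ε) * (algebraMap ℂ S Complex.I * (inl ε - ε))
      = algebraMap ℂ S Complex.I * (inl ε * inl ε - ε * ε) := by ring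
  rw [this, e1, e2]; ring

lemma hne : (inr ε : S) ≠ 0 := by
  intro h
  have h2 := congrArg TrivSqZeroExt.snd h
  rw [snd_inr] at h2
  have h3 := congrArg TrivSqZeroExt.snd h2
  simp at h3


/-- The orbifold Chow ring `A = ℚ[x,y]/⟨x² − y², xy⟩` of the toric Deligne-Mumford
stack of `ℙ(1,2,1)`. -/
noncomputable abbrev ringA : Type :=
  MvPolynomial (Fin 2) ℚ ⧸
    Ideal.span ({X 0 ^ 2 - X 1 ^ 2, X 0 * X 1} : Set (MvPolynomial (Fin 2) ℚ))

/-- The Chow ring `B = ℚ[x,y]/⟨x², (x+y)²⟩` of the crepant resolution `𝔽₂`. -/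
noncomputable abbrev ringB : Type :=
  MvPolynomial (Fin 2) ℚ ⧸
    Ideal.span ({X 0 ^ 2, (X 0 + X 1) ^ 2} : Set (MvPolynomial (Fin 2) ℚ))

/-- The degree-one part of `ringA`: the span of the images of `x` and `y`. -/
noncomputable def degOneA : Submodule ℚ ringA :=
  Submodule.span ℚ {Ideal.Quotient.mk _ (X 0), Ideal.Quotient.mk _ (X 1)}

/-- The degree-one part of `ringB`. -/
noncomputable def degOneB : Submodule ℚ ringB :=
  Submodule.span ℚ {Ideal.Quotient.mk _ (X 0), Ideal.Quotient.mk _ (X 1)}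

/-- **The orbifold Chow ring of `ℙ(1,2,1)` is not isomorphic to the Chow ring of its
crepant resolution.**  The rings `A = ℚ[x,y]/⟨x² − y², xy⟩` and
`B = ℚ[x,y]/⟨x², (x+y)²⟩` are not isomorphic as graded `ℚ`-algebras: `B` contains a
nonzero degree-one element with square zero, while `A` contains no such element. -/
noncomputable def φA : MvPolynomial (Fin 2) ℚ →ₐ[ℚ] S := aeval ![uu, vv]

lemma φA_vanish : ∀ a ∈ Ideal.span ({X 0 ^ 2 - X 1 ^ 2, X 0 * X 1} :
    Set (MvPolynomial (Fin 2) ℚ)), φA a = 0 := by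
  intro a ha
  have hle : Ideal.span ({X 0 ^ 2 - X 1 ^ 2, X 0 * X 1} : Set (MvPolynomial (Fin 2) ℚ))
      ≤ RingHom.ker φA.toRingHom := by
    rw [Ideal.span_le]
    rintro p hp
    rcases hp with rfl | rfl
    · simp only [SetLike.mem_coe, RingHom.mem_ker, AlgHom.toRingHom_eq_coe, RingHom.coe_coe,
        map_sub, map_pow, φA, aeval_X]
      simp [pow_two, hu2, hv2]
    · simp only [SetLike.mem_coe, RingHom.mem_ker, AlgHom.toRingHom_eq_coe, RingHom.coe_coe,
        map_mul, φA, aeval_X]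
      simp [huv]
  exact hle ha

noncomputable def ψA : ringA →ₐ[ℚ] S :=
  Ideal.Quotient.liftₐ _ φA φA_vanish

lemma ψA_x : ψA (Ideal.Quotient.mk _ (X 0)) = uu := by
  simp [ψA, φA, Ideal.Quotient.liftₐ_apply]
  erw [Ideal.Quotient.lift_mk]; simp

lemma ψA_y : ψA (Ideal.Quotient.mk _ (X 1)) = vv := by
  simp [ψA, φA, Ideal.Quotient.liftₐ_apply]
  erw [Ideal.Quotient.lift_mk]; simp


-- A has no nonzero square-zero element in degree one
lemma partA : ∀ z ∈ degOneA, z * z = 0 → z = 0 := by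
  intro z hz hzz
  rw [degOneA, Submodule.mem_span_pair] at hz
  obtain ⟨a, b, rfl⟩ := hz
  have h0 : ψA ((a • Ideal.Quotient.mk _ (X 0) + b • Ideal.Quotient.mk _ (X 1)) *
      (a • Ideal.Quotient.mk _ (X 0) + b • Ideal.Quotient.mk _ (X 1))) = 0 := by
    rw [hzz, map_zero]
  rw [map_mul, map_add, map_smul, map_smul, ψA_x, ψA_y] at h0
  have hexp : (a • uu + b • vv) * (a • uu + b • vv)
      = (a * a + b * b) • (inr ε + inr ε : S) := by
    rw [add_mul, mul_add, mul_add, smul_mul_smul_comm, smul_mul_smul_comm, smul_mul_smul_comm,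
      smul_mul_smul_comm, hu2, hv2, huv, mul_comm vv uu, huv]
    module
  rw [hexp] at h0
  rw [← inr_add, ← inr_smul, ← inr_zero] at h0
  have h1 : (a * a + b * b) • (ε + ε : DualNumber ℂ) = 0 := inr_injective h0
  have h2 := congrArg TrivSqZeroExt.snd h1
  rw [TrivSqZeroExt.snd_smul, TrivSqZeroExt.snd_zero] at h2
  simp only [TrivSqZeroExt.snd_add, snd_eps] at h2
  have h3 : ((a * a + b * b : ℚ) : ℂ) * (1 + 1) = 0 := by
    rw [← h2]; rw [Rat.smul_def]
  have h4 : ((a * a + b * b : ℚ) : ℂ) = 0 := by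
    have : (1 + 1 : ℂ) ≠ 0 := by norm_num
    exact (mul_eq_zero.mp h3).resolve_right this
  have h5 : a * a + b * b = 0 := by exact_mod_cast h4
  have ha : a = 0 := mul_self_eq_zero.mp (by nlinarith [mul_self_nonneg a, mul_self_nonneg b])
  have hb : b = 0 := mul_self_eq_zero.mp (by nlinarith [mul_self_nonneg a, mul_self_nonneg b])
  rw [ha, hb, zero_smul, zero_smul, add_zero]

-- B side
noncomputable def φB : MvPolynomial (Fin 2) ℚ →ₐ[ℚ] DualNumber ℚ := aeval ![ε, -ε]

lemma φB_vanish : ∀ a ∈ Ideal.span ({X 0 ^ 2, (X 0 + X 1) ^ 2} :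
    Set (MvPolynomial (Fin 2) ℚ)), φB a = 0 := by
  intro a ha
  have hle : Ideal.span ({X 0 ^ 2, (X 0 + X 1) ^ 2} : Set (MvPolynomial (Fin 2) ℚ))
      ≤ RingHom.ker φB.toRingHom := by
    rw [Ideal.span_le]
    rintro p hp
    rcases hp with rfl | rfl
    · simp only [SetLike.mem_coe, RingHom.mem_ker, AlgHom.toRingHom_eq_coe, RingHom.coe_coe,
        map_pow, φB, aeval_X]
      simp [pow_two]
    · simp only [SetLike.mem_coe, RingHom.mem_ker, AlgHom.toRingHom_eq_coe, RingHom.coe_coe,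
        map_pow, map_add, φB, aeval_X]
      simp
  exact hle ha

noncomputable def ψB : ringB →ₐ[ℚ] DualNumber ℚ :=
  Ideal.Quotient.liftₐ _ φB φB_vanish

lemma partB : ∃ z ∈ degOneB, z ≠ 0 ∧ z * z = 0 := by
  refine ⟨Ideal.Quotient.mk _ (X 0), ?_, ?_, ?_⟩
  · exact Submodule.subset_span (Set.mem_insert _ _)
  · intro h
    have h0 : ψB (Ideal.Quotient.mk _ (X 0)) = 0 := by rw [h, map_zero]
    have h1 : ψB (Ideal.Quotient.mk _ (X 0)) = (ε : DualNumber ℚ) := by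
      simp [ψB, φB, Ideal.Quotient.liftₐ_apply]
      erw [Ideal.Quotient.lift_mk]; simp
    rw [h1] at h0
    have := congrArg TrivSqZeroExt.snd h0
    simp at this
  · rw [← map_mul, ← pow_two, Ideal.Quotient.eq_zero_iff_mem]
    exact Ideal.subset_span (Set.mem_insert _ _)

theorem stmt_13 :
    (¬ ∃ e : ringA ≃ₐ[ℚ] ringB,
        Submodule.map e.toLinearMap degOneA = degOneB) ∧
    (∃ z ∈ degOneB, z ≠ 0 ∧ z * z = 0) ∧
    (∀ z ∈ degOneA, z * z = 0 → z = 0) := by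
  refine ⟨?_, partB, partA⟩
  rintro ⟨e, he⟩
  obtain ⟨z, hzmem, hzne, hzz⟩ := partB
  rw [← he] at hzmem
  obtain ⟨w, hw, rfl⟩ := hzmem
  have hww : w * w = 0 := by
    apply e.injective
    rw [map_mul, map_zero]
    exact hzz
  have : w = 0 := partA w hw hww
  rw [this] at hzne
  exact hzne (map_zero _)
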